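/- There exists K > 0 (one may take K = 2T²) such that for every x in 𝒳 = 𝒳_c ∪ 𝒳_r, ∫₀ᵀ |x(t)|² dt ≤ K ∫₀ᵀ |ẋ(t)|² dt. -/

import Mathlib

open MeasureTheory Set

/-- `x : [0,T] → ℝ²` (modeled as `ℂ`) is `H¹` with (weak) derivative `x'`. -/
def IsH1 (T : ℝ) (x x' : ℝ → ℂ) : Prop :=
  Continuous x ∧ IntervalIntegrable x' volume 0 T ∧
  IntervalIntegrable (fun t => ‖x' t‖ ^ 2) volume 0 T ∧
  ∀ t ∈ Set.Icc (0 : ℝ) T, x t = x 0 + ∫ s in (0 : ℝ)..t, x' s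

/-- `x` has nonzero winding number around the origin on `[0,T]`: there is a continuous
argument `θ` along `x` with `θ T − θ 0 = 2πk` for some nonzero integer `k`. -/
def Winds (T : ℝ) (x : ℝ → ℂ) : Prop :=
  ∃ θ : ℝ → ℝ, ContinuousOn θ (Set.Icc 0 T) ∧
    (∀ t ∈ Set.Icc (0 : ℝ) T,
      x t = (‖x t‖ : ℂ) * Complex.exp ((θ t : ℂ) * Complex.I)) ∧
    ∃ k : ℤ, k ≠ 0 ∧ θ T - θ 0 = 2 * Real.pi * (k : ℝ)

/-- `x` belongs to `𝒳 = 𝒳_c ∪ 𝒳_r`: either it touches the origin, or it avoids the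
origin and has nonzero winding number around it. -/
def MemX (T : ℝ) (x : ℝ → ℂ) : Prop :=
  (∃ t₀ ∈ Set.Icc (0 : ℝ) T, x t₀ = 0) ∨
    ((∀ t ∈ Set.Icc (0 : ℝ) T, x t ≠ 0) ∧ Winds T x)

/-- There is `K > 0` (one may take `K = 2T²`) such that the Poincaré-type
inequality `∫₀ᵀ |x|² ≤ K ∫₀ᵀ |ẋ|²` holds for every `H¹` loop `x ∈ 𝒳 = 𝒳_c ∪ 𝒳_r`. -/
theorem poincare_on_X (T : ℝ) (hT : 0 < T) :
    ∃ K > 0, ∀ x x' : ℝ → ℂ, IsH1 T x x' → x 0 = x T → MemX T x →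
      ∫ t in (0 : ℝ)..T, ‖x t‖ ^ 2 ≤ K * ∫ t in (0 : ℝ)..T, ‖x' t‖ ^ 2 := by
  refine ⟨9 * T ^ 2, by positivity, ?_⟩
  rintro x x' ⟨hcont, hint, hint2, hrep⟩ hloop hmem
  set I := ∫ t in (0 : ℝ)..T, ‖x' t‖ with hIdef
  set J := ∫ t in (0 : ℝ)..T, ‖x' t‖ ^ 2 with hJdef
  have hnormint : IntervalIntegrable (fun t => ‖x' t‖) volume 0 T := hint.norm
  have hInn : 0 ≤ I :=
    intervalIntegral.integral_nonneg hT.le (fun _ _ => norm_nonneg _)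
  have hJnn : 0 ≤ J :=
    intervalIntegral.integral_nonneg hT.le (fun _ _ => sq_nonneg _)
  -- step 1: ‖x t - x 0‖ ≤ I for t ∈ [0,T]
  have hdiff : ∀ t ∈ Icc (0 : ℝ) T, ‖x t - x 0‖ ≤ I := by
    intro t ht
    rw [hrep t ht, add_sub_cancel_left]
    calc ‖∫ s in (0 : ℝ)..t, x' s‖ ≤ ∫ s in (0 : ℝ)..t, ‖x' s‖ :=
          intervalIntegral.norm_integral_le_integral_norm ht.1
      _ ≤ I := by
          refine intervalIntegral.integral_mono_interval le_rfl ht.1 ht.2 ?_ hnormint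
          filter_upwards with s using norm_nonneg _
  -- step 2: a pivot point with small norm
  have hpiv : ∃ t₀ ∈ Icc (0 : ℝ) T, ‖x t₀‖ ≤ I := by
    rcases hmem with ⟨t₀, ht₀, hx0⟩ | ⟨-, θ, hθc, hxrep, k, hk, hwind⟩
    · exact ⟨t₀, ht₀, by simp [hx0, hInn]⟩
    · -- find t₁ with θ t₁ = θ 0 ± π
      have hpi := Real.pi_pos
      have h0mem : (0 : ℝ) ∈ Icc (0 : ℝ) T := ⟨le_rfl, hT.le⟩
      have hTmem : T ∈ Icc (0 : ℝ) T := ⟨hT.le, le_rfl⟩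
      have ht1 : ∃ t₁ ∈ Icc (0 : ℝ) T, θ t₁ = θ 0 + Real.pi ∨ θ t₁ = θ 0 - Real.pi := by
        rcases hk.lt_or_gt with hkneg | hkpos
        · have hk'' : k ≤ -1 := by omega
          have hk' : (k : ℝ) ≤ -1 := by exact_mod_cast hk''
          have hmem' : θ 0 - Real.pi ∈ Icc (θ T) (θ 0) := by
            constructor <;> nlinarith
          obtain ⟨t₁, ht₁, h⟩ := intermediate_value_Icc' hT.le hθc hmem'
          exact ⟨t₁, ht₁, Or.inr h⟩
        · have hk' : (1 : ℝ) ≤ (k : ℝ) := by exact_mod_cast hkpos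
          have hmem' : θ 0 + Real.pi ∈ Icc (θ 0) (θ T) := by
            constructor <;> nlinarith
          obtain ⟨t₁, ht₁, h⟩ := intermediate_value_Icc hT.le hθc hmem'
          exact ⟨t₁, ht₁, Or.inl h⟩
      obtain ⟨t₁, ht₁, hθ₁⟩ := ht1
      have hexp : Complex.exp ((θ t₁ : ℂ) * Complex.I)
          = -Complex.exp ((θ 0 : ℂ) * Complex.I) := by
        rcases hθ₁ with h | h <;> rw [h] <;> push_cast
        · rw [add_mul, Complex.exp_add, Complex.exp_pi_mul_I]; ring
        · rw [sub_mul, Complex.exp_sub, Complex.exp_pi_mul_I]; field_simp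
      have hsum : ‖x 0 - x t₁‖ = ‖x 0‖ + ‖x t₁‖ := by
        have e0 := hxrep 0 h0mem
        have e1 := hxrep t₁ ht₁
        rw [hexp] at e1
        set a := ‖x 0‖ with ha
        set b := ‖x t₁‖ with hb
        have hab : (0 : ℝ) ≤ a + b := by positivity
        have h1 : x 0 - x t₁
            = ((a + b : ℝ) : ℂ) * Complex.exp ((θ 0 : ℂ) * Complex.I) := by
          rw [e0, e1]; push_cast; ring
        rw [h1, norm_mul, Complex.norm_real,
          Complex.norm_exp_ofReal_mul_I, mul_one, Real.norm_eq_abs]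
        exact abs_of_nonneg hab
      refine ⟨0, h0mem, ?_⟩
      have hd := hdiff t₁ ht₁
      rw [norm_sub_rev] at hsum
      nlinarith [norm_nonneg (x t₁)]
  obtain ⟨t₀, ht₀, hpivot⟩ := hpiv
  -- step 3: uniform bound ‖x t‖ ≤ 3 I
  have hbd : ∀ t ∈ Icc (0 : ℝ) T, ‖x t‖ ≤ 3 * I := by
    intro t ht
    have h1 := hdiff t ht
    have h2 := hdiff t₀ ht₀
    have : ‖x t‖ ≤ ‖x t₀‖ + (‖x t - x 0‖ + ‖x t₀ - x 0‖) := by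
      have := norm_sub_norm_le (x t - x 0) (x t₀ - x 0)
      have h3 := norm_add_le (x t₀) (x t - x t₀)
      have h4 : x t₀ + (x t - x t₀) = x t := by ring
      rw [h4] at h3
      have h5 : ‖x t - x t₀‖ ≤ ‖x t - x 0‖ + ‖x t₀ - x 0‖ := by
        have := norm_sub_le (x t - x 0) (x t₀ - x 0)
        have h6 : (x t - x 0) - (x t₀ - x 0) = x t - x t₀ := by ring
        rwa [h6] at this
      linarith
    linarith
  -- step 4: ∫ ‖x‖² ≤ 9 I² T
  have hxint : IntervalIntegrable (fun t => ‖x t‖ ^ 2) volume 0 T :=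
    ((hcont.norm.pow 2)).intervalIntegrable 0 T
  have hstep4 : ∫ t in (0 : ℝ)..T, ‖x t‖ ^ 2 ≤ 9 * (T * I ^ 2) := by
    have : ∫ t in (0 : ℝ)..T, ‖x t‖ ^ 2 ≤ ∫ _ in (0 : ℝ)..T, 9 * I ^ 2 := by
      refine intervalIntegral.integral_mono_on hT.le hxint (intervalIntegrable_const) ?_
      intro t ht
      nlinarith [hbd t ht, norm_nonneg (x t), hInn]
    simpa using this
  -- step 5: Cauchy-Schwarz  I² ≤ T * J
  have key : ∀ ε : ℝ, 0 < ε → I ≤ ε * T / 2 + J / (2 * ε) := by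
    intro ε hε
    have hrhsint : IntervalIntegrable (fun t => ε / 2 + ‖x' t‖ ^ 2 / (2 * ε)) volume 0 T :=
      (intervalIntegrable_const).add (hint2.div_const _)
    have hmono : I ≤ ∫ t in (0 : ℝ)..T, (ε / 2 + ‖x' t‖ ^ 2 / (2 * ε)) := by
      refine intervalIntegral.integral_mono_on hT.le hnormint hrhsint ?_
      intro t _
      have h := sq_nonneg (‖x' t‖ - ε)
      rw [div_add_div _ _ (two_ne_zero) (by positivity), le_div_iff₀ (by positivity)]
      nlinarith
    have heq : ∫ t in (0 : ℝ)..T, (ε / 2 + ‖x' t‖ ^ 2 / (2 * ε))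
        = ε * T / 2 + J / (2 * ε) := by
      rw [intervalIntegral.integral_add (intervalIntegrable_const) (hint2.div_const _),
        intervalIntegral.integral_const, intervalIntegral.integral_div, ← hJdef,
        smul_eq_mul, sub_zero]
      ring
    linarith [heq ▸ hmono]
  have hCS : I ^ 2 ≤ T * J := by
    rcases eq_or_lt_of_le hInn with h0 | hIpos
    · rw [← h0]
      simpa using mul_nonneg hT.le hJnn
    · have h := key (I / T) (div_pos hIpos hT)
      have h1 : I / T * T / 2 = I / 2 := by field_simp
      have h2 : J / (2 * (I / T)) = J * T / (2 * I) := by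
        rw [div_eq_div_iff (by positivity) (by positivity)]
        field_simp
      rw [h1, h2] at h
      have h3 : I / 2 ≤ J * T / (2 * I) := by linarith
      rw [div_le_div_iff₀ (by norm_num) (by positivity)] at h3
      nlinarith
  -- conclude
  calc ∫ t in (0 : ℝ)..T, ‖x t‖ ^ 2 ≤ 9 * (T * I ^ 2) := hstep4
    _ ≤ 9 * (T * (T * J)) := by nlinarith
    _ = 9 * T ^ 2 * J := by ring
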